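/- Let P and Q be nonempty finite subsets of ℝ² and let S ⊆ ℝ² be finite. Suppose (convexHull(P) + ray(d)) ∩ S = ∅ and (convexHull(Q) + ray(d)) ∩ S = ∅, where d = (0, −1). Then there exists δ₀ > 0 such that for every δ with |δ| < δ₀, setting v = (δ, −1): (i) (convexHull(P) + ray(v)) ∩ S = ∅ and (convexHull(Q) + ray(v)) ∩ S = ∅; and (ii) if (convexHull(P) + ray(d)) ∩ (convexHull(Q) + ray(d)) = ∅, then (convexHull(P) + ray(v)) ∩ (convexHull(Q) + ray(v)) = ∅. -/

import Mathlib

open Set Pointwise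

/-- The ray (halfline) from the origin in direction `v`. -/
def ray (v : ℝ × ℝ) : Set (ℝ × ℝ) := {x | ∃ t : ℝ, 0 ≤ t ∧ x = t • v}

lemma ray_d_eq : ray ((0 : ℝ), (-1 : ℝ)) = {x : ℝ × ℝ | x.1 = 0 ∧ x.2 ≤ 0} := by
  ext x
  constructor
  · rintro ⟨t, ht, rfl⟩
    simp [Prod.smul_def]
    linarith
  · rintro ⟨h1, h2⟩
    exact ⟨-x.2, by linarith, by ext <;> simp [h1] ⟩

lemma isClosed_ray_d : IsClosed (ray ((0 : ℝ), (-1 : ℝ))) := by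
  rw [ray_d_eq]
  exact (isClosed_eq (continuous_fst) continuous_const).inter
    (isClosed_le (continuous_snd) continuous_const)

lemma zero_mem_ray (v : ℝ × ℝ) : (0 : ℝ × ℝ) ∈ ray v := ⟨0, le_refl 0, by simp⟩

lemma key (K A : Set (ℝ × ℝ)) (hK : IsCompact K) (hKne : K.Nonempty) (hA : IsCompact A)
    (hdisj : (K + ray (0, -1)) ∩ A = ∅) :
    ∃ δ₀ : ℝ, 0 < δ₀ ∧ ∀ δ : ℝ, |δ| < δ₀ → (K + ray (δ, -1)) ∩ A = ∅ := by
  rcases A.eq_empty_or_nonempty with h | hAne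
  · exact ⟨1, one_pos, fun _ _ => by simp [h]⟩
  -- B = K + ray d is closed and nonempty
  set B : Set (ℝ × ℝ) := K + ray (0, -1) with hB
  have hBclosed : IsClosed B := IsClosed.add_left_of_isCompact isClosed_ray_d hK
  have hBne : B.Nonempty := hKne.add ⟨0, zero_mem_ray _⟩
  -- the min of infDist over A is positive
  obtain ⟨a₀, ha₀A, ha₀⟩ := hA.exists_isMinOn hAne
    ((Metric.continuous_infDist_pt B).continuousOn)
  have ha₀B : a₀ ∉ B := by
    intro h
    have : a₀ ∈ B ∩ A := ⟨h, ha₀A⟩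
    rw [hdisj] at this; exact this
  have hε : 0 < Metric.infDist a₀ B := (hBclosed.notMem_iff_infDist_pos hBne).1 ha₀B
  set ε := Metric.infDist a₀ B with hεdef
  -- bound on t : max of snd over K minus min of snd over A
  obtain ⟨pM, hpM, hpMmax⟩ := hK.exists_isMaxOn hKne continuous_snd.continuousOn
  obtain ⟨am, hamA, hammin⟩ := hA.exists_isMinOn hAne continuous_snd.continuousOn
  set T : ℝ := max 0 (pM.2 - am.2) with hT
  have hT0 : 0 ≤ T := le_max_left _ _
  refine ⟨ε / (T + 1), by positivity, fun δ hδ => ?_⟩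
  ext x
  simp only [Set.mem_inter_iff, Set.mem_empty_iff_false, iff_false]
  rintro ⟨hxK, hxA⟩
  obtain ⟨p, hp, r, hr, hpr⟩ := Set.mem_add.1 hxK
  obtain ⟨t, ht, rfl⟩ := hr
  -- t is bounded
  have hx2 : x.2 = p.2 - t := by
    rw [← hpr]; simp [Prod.smul_def]; ring
  have htT : t ≤ T := by
    have h1 : p.2 ≤ pM.2 := hpMmax hp
    have h2 : am.2 ≤ x.2 := hammin hxA
    have : t = p.2 - x.2 := by linarith [hx2]
    rw [this]
    calc p.2 - x.2 ≤ pM.2 - am.2 := by linarith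
    _ ≤ T := le_max_right _ _
  -- the vertical point is in B
  have hb : p + t • ((0 : ℝ), (-1 : ℝ)) ∈ B :=
    Set.add_mem_add hp ⟨t, ht, rfl⟩
  have hdist : dist x (p + t • ((0 : ℝ), (-1 : ℝ))) = |t * δ| := by
    rw [← hpr]
    rw [Prod.dist_eq]
    simp [Prod.smul_def, dist_eq_norm, abs_mul]
    positivity
  have h1 : Metric.infDist x B ≤ |t * δ| := by
    rw [← hdist]; exact Metric.infDist_le_dist_of_mem hb
  have h2 : ε ≤ Metric.infDist x B := ha₀ hxA
  have h3 : |t * δ| < ε := by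
    rw [abs_mul, abs_of_nonneg ht]
    have hδ' : |δ| * (T + 1) < ε := (lt_div_iff₀ (by positivity)).1 hδ
    nlinarith [abs_nonneg δ, mul_le_mul_of_nonneg_right htT (abs_nonneg δ)]
  linarith

theorem rotate_strips (P Q : Finset (ℝ × ℝ)) (hP : P.Nonempty) (hQ : Q.Nonempty)
    (S : Finset (ℝ × ℝ))
    (hPS : (convexHull ℝ (P : Set (ℝ × ℝ)) + ray (0, -1)) ∩ ↑S = ∅)
    (hQS : (convexHull ℝ (Q : Set (ℝ × ℝ)) + ray (0, -1)) ∩ ↑S = ∅) :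
    ∃ δ₀ : ℝ, 0 < δ₀ ∧ ∀ δ : ℝ, |δ| < δ₀ →
      ((convexHull ℝ (P : Set (ℝ × ℝ)) + ray (δ, -1)) ∩ ↑S = ∅ ∧
        (convexHull ℝ (Q : Set (ℝ × ℝ)) + ray (δ, -1)) ∩ ↑S = ∅) ∧
      ((convexHull ℝ (P : Set (ℝ × ℝ)) + ray (0, -1)) ∩
          (convexHull ℝ (Q : Set (ℝ × ℝ)) + ray (0, -1)) = ∅ →
        (convexHull ℝ (P : Set (ℝ × ℝ)) + ray (δ, -1)) ∩
          (convexHull ℝ (Q : Set (ℝ × ℝ)) + ray (δ, -1)) = ∅) := by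
  set KP := convexHull ℝ (P : Set (ℝ × ℝ)) with hKP
  set KQ := convexHull ℝ (Q : Set (ℝ × ℝ)) with hKQ
  have hKPc : IsCompact KP := P.finite_toSet.isCompact_convexHull ℝ
  have hKQc : IsCompact KQ := Q.finite_toSet.isCompact_convexHull ℝ
  have hKPne : KP.Nonempty := hP.to_set.convexHull
  have hKQne : KQ.Nonempty := hQ.to_set.convexHull
  have hSc : IsCompact (S : Set (ℝ × ℝ)) := S.finite_toSet.isCompact
  obtain ⟨δ₁, hδ₁, h1⟩ := key KP S hKPc hKPne hSc hPS
  obtain ⟨δ₂, hδ₂, h2⟩ := key KQ S hKQc hKQne hSc hQS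
  by_cases hPQ : (KP + ray (0, -1)) ∩ (KQ + ray (0, -1)) = ∅
  · -- also get δ's for part (ii)
    have hQ_P : (KQ + ray (0, -1)) ∩ KP = ∅ := by
      rw [Set.eq_empty_iff_forall_notMem] at hPQ ⊢
      intro x ⟨hx1, hx2⟩
      exact hPQ x ⟨⟨x, hx2, 0, zero_mem_ray _, add_zero x⟩, hx1⟩
    have hP_Q : (KP + ray (0, -1)) ∩ KQ = ∅ := by
      rw [Set.eq_empty_iff_forall_notMem] at hPQ ⊢
      intro x ⟨hx1, hx2⟩
      exact hPQ x ⟨hx1, ⟨x, hx2, 0, zero_mem_ray _, add_zero x⟩⟩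
    obtain ⟨δ₃, hδ₃, h3⟩ := key KQ KP hKQc hKQne hKPc hQ_P
    obtain ⟨δ₄, hδ₄, h4⟩ := key KP KQ hKPc hKPne hKQc hP_Q
    refine ⟨min (min δ₁ δ₂) (min δ₃ δ₄), by positivity, fun δ hδ => ?_⟩
    have e1 := h1 δ (lt_of_lt_of_le hδ ((min_le_left _ _).trans (min_le_left _ _)))
    have e2 := h2 δ (lt_of_lt_of_le hδ ((min_le_left _ _).trans (min_le_right _ _)))
    have e3 := h3 δ (lt_of_lt_of_le hδ ((min_le_right _ _).trans (min_le_left _ _)))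
    have e4 := h4 δ (lt_of_lt_of_le hδ ((min_le_right _ _).trans (min_le_right _ _)))
    refine ⟨⟨e1, e2⟩, fun _ => ?_⟩
    rw [Set.eq_empty_iff_forall_notMem]
    rintro x ⟨hxP, hxQ⟩
    obtain ⟨p, hp, r, hr, hpr⟩ := Set.mem_add.1 hxP
    obtain ⟨t, ht, rfl⟩ := hr
    obtain ⟨q, hq, r', hr', hqr⟩ := Set.mem_add.1 hxQ
    obtain ⟨u, hu, rfl⟩ := hr'
    have heq : p + t • ((δ:ℝ), (-1:ℝ)) = q + u • ((δ:ℝ), (-1:ℝ)) := by rw [hpr, hqr]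
    rcases le_total t u with hle | hle
    · have hmem : p ∈ (KQ + ray (δ, -1)) ∩ KP := by
        refine ⟨⟨q, hq, (u - t) • ((δ:ℝ), (-1:ℝ)), ⟨u - t, by linarith, rfl⟩, ?_⟩, hp⟩
        have hh1 := congrArg Prod.fst heq
        have hh2 := congrArg Prod.snd heq
        simp [Prod.smul_def] at hh1 hh2
        apply Prod.ext <;> simp [Prod.smul_def] <;> [linear_combination -hh1; linear_combination -hh2]
      rw [e3] at hmem; exact hmem
    · have hmem : q ∈ (KP + ray (δ, -1)) ∩ KQ := by
        refine ⟨⟨p, hp, (t - u) • ((δ:ℝ), (-1:ℝ)), ⟨t - u, by linarith, rfl⟩, ?_⟩, hq⟩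
        have hh1 := congrArg Prod.fst heq
        have hh2 := congrArg Prod.snd heq
        simp [Prod.smul_def] at hh1 hh2
        apply Prod.ext <;> simp [Prod.smul_def] <;> [linear_combination hh1; linear_combination hh2]
      rw [e4] at hmem; exact hmem
  · refine ⟨min δ₁ δ₂, lt_min hδ₁ hδ₂, fun δ hδ => ?_⟩
    exact ⟨⟨h1 δ (lt_of_lt_of_le hδ (min_le_left _ _)),
        h2 δ (lt_of_lt_of_le hδ (min_le_right _ _))⟩, fun h => absurd h hPQ⟩
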